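/- In the graded tensor product A_q ⊗ A_q, the elements Ξ = x⊗ξ + ξ⊗x, Θ = x⊗θ + θ⊗x and Z = x⊗z + z⊗x satisfy Ξ·Z = −q⁻¹ Z·Ξ and Θ·Z = −q⁻¹ Z·Θ. Consequently, together with the relations among X = x⊗x, Ξ, Θ, Z already established, the assignment Δ(x) = x⊗x, Δ(ξ) = x⊗ξ + ξ⊗x, Δ(θ) = x⊗θ + θ⊗x, Δ(z) = x⊗z + z⊗x extends to a well-defined ℂ-algebra morphism Δ : A_q → A_q ⊗ A_q. -/

import Mathlib

/-!
STATEMENT 5: In the graded tensor product `A_q ⊗ A_q`, the elements `Ξ = x⊗ξ + ξ⊗x`,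
`Θ = x⊗θ + θ⊗x` and `Z = x⊗z + z⊗x` satisfy `Ξ·Z = −q⁻¹ Z·Ξ` and `Θ·Z = −q⁻¹ Z·Θ`.
Consequently, together with the relations among `X = x⊗x`, `Ξ`, `Θ`, `Z` already
established, the assignment `Δ(x) = x⊗x`, `Δ(ξ) = x⊗ξ + ξ⊗x`, `Δ(θ) = x⊗θ + θ⊗x`,
`Δ(z) = x⊗z + z⊗x` extends to a well-defined `ℂ`-algebra morphism `Δ : A_q → A_q ⊗ A_q`
(a unital `ℂ`-linear map which is multiplicative for the graded multiplication on
`A_q ⊗ A_q`).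
-/
open scoped TensorProduct

namespace DGQS

/-- The standard scalar product `⟨(a,b),(a',b')⟩ = aa' + bb'` on `ℤ₂ × ℤ₂`. -/
def pair2 (γ δ : ZMod 2 × ZMod 2) : ZMod 2 := γ.1 * δ.1 + γ.2 * δ.2

/-- The sign `(−1)^{⟨γ,δ⟩}`. -/
noncomputable def gsign (γ δ : ZMod 2 × ZMod 2) : ℂ := (-1 : ℂ) ^ (pair2 γ δ).val

/-- The defining relations of the double-graded quantum superplane, imposed on the free
algebra on four generators `x = ι 0`, `ξ = ι 1`, `θ = ι 2`, `z = ι 3`: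
`xξ = q ξx`, `xθ = q θx`, `xz = zx`, `ξ² = 0`, `θ² = 0`, `ξθ = θξ`,
`ξz = −q⁻¹ zξ`, `θz = −q⁻¹ zθ`. -/
inductive Rel (q : ℂ) : FreeAlgebra ℂ (Fin 4) → FreeAlgebra ℂ (Fin 4) → Prop
  | x_xi : Rel q (FreeAlgebra.ι ℂ (0 : Fin 4) * FreeAlgebra.ι ℂ (1 : Fin 4))
      (q • (FreeAlgebra.ι ℂ (1 : Fin 4) * FreeAlgebra.ι ℂ (0 : Fin 4)))
  | x_th : Rel q (FreeAlgebra.ι ℂ (0 : Fin 4) * FreeAlgebra.ι ℂ (2 : Fin 4))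
      (q • (FreeAlgebra.ι ℂ (2 : Fin 4) * FreeAlgebra.ι ℂ (0 : Fin 4)))
  | x_z : Rel q (FreeAlgebra.ι ℂ (0 : Fin 4) * FreeAlgebra.ι ℂ (3 : Fin 4))
      (FreeAlgebra.ι ℂ (3 : Fin 4) * FreeAlgebra.ι ℂ (0 : Fin 4))
  | xi_sq : Rel q (FreeAlgebra.ι ℂ (1 : Fin 4) * FreeAlgebra.ι ℂ (1 : Fin 4)) 0
  | th_sq : Rel q (FreeAlgebra.ι ℂ (2 : Fin 4) * FreeAlgebra.ι ℂ (2 : Fin 4)) 0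
  | xi_th : Rel q (FreeAlgebra.ι ℂ (1 : Fin 4) * FreeAlgebra.ι ℂ (2 : Fin 4))
      (FreeAlgebra.ι ℂ (2 : Fin 4) * FreeAlgebra.ι ℂ (1 : Fin 4))
  | xi_z : Rel q (FreeAlgebra.ι ℂ (1 : Fin 4) * FreeAlgebra.ι ℂ (3 : Fin 4))
      ((-q⁻¹) • (FreeAlgebra.ι ℂ (3 : Fin 4) * FreeAlgebra.ι ℂ (1 : Fin 4)))
  | th_z : Rel q (FreeAlgebra.ι ℂ (2 : Fin 4) * FreeAlgebra.ι ℂ (3 : Fin 4))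
      ((-q⁻¹) • (FreeAlgebra.ι ℂ (3 : Fin 4) * FreeAlgebra.ι ℂ (2 : Fin 4)))

/-- The algebra of polynomials on the double-graded quantum superplane `ℝ_q(1|𝟏)`. -/
abbrev Aq (q : ℂ) : Type := RingQuot (Rel q)

/-- The generators of `A_q`. -/
noncomputable def gen (q : ℂ) (i : Fin 4) : Aq q :=
  RingQuot.mkAlgHom ℂ (Rel q) (FreeAlgebra.ι ℂ i)

/-- The generator `x`, of degree `(0,0)`. -/
noncomputable def X (q : ℂ) : Aq q := gen q 0
/-- The generator `ξ`, of degree `(0,1)`. -/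
noncomputable def Xi (q : ℂ) : Aq q := gen q 1
/-- The generator `θ`, of degree `(1,0)`. -/
noncomputable def Th (q : ℂ) : Aq q := gen q 2
/-- The generator `z`, of degree `(1,1)`. -/
noncomputable def Zg (q : ℂ) : Aq q := gen q 3

/-- The `ℤ₂ × ℤ₂`-degrees of the generators. -/
def dg : Fin 4 → ZMod 2 × ZMod 2 := ![(0, 0), (0, 1), (1, 0), (1, 1)]

/-- The homogeneous component of degree `γ` of `A_q`: the span of the images of the
words in the generators of total degree `γ`. -/
noncomputable def grading (q : ℂ) (γ : ZMod 2 × ZMod 2) : Submodule ℂ (Aq q) :=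
  Submodule.span ℂ
    { a | ∃ w : List (Fin 4), (w.map dg).sum = γ ∧ a = (w.map (gen q)).prod }

-- ################ my aux ################
variable (q : ℂ)

lemma gen_mem (i : Fin 4) : gen q i ∈ grading q (dg i) :=
  Submodule.subset_span ⟨[i], by simp, by simp⟩

lemma one_mem : (1 : Aq q) ∈ grading q 0 :=
  Submodule.subset_span ⟨[], by simp, by simp⟩

lemma grading_mul {γ δ : ZMod 2 × ZMod 2} {a b : Aq q}
    (ha : a ∈ grading q γ) (hb : b ∈ grading q δ) : a * b ∈ grading q (γ + δ) := by
  have h : a * b ∈ grading q γ * grading q δ := Submodule.mul_mem_mul ha hb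
  rw [grading, grading, Submodule.span_mul_span] at h
  refine Submodule.span_le.mpr ?_ h
  rintro _ ⟨x, ⟨w1, hw1, rfl⟩, y, ⟨w2, hw2, rfl⟩, rfl⟩
  exact Submodule.subset_span ⟨w1 ++ w2, by simp [hw1, hw2], by simp⟩

lemma mem_X : X q ∈ grading q ((0 : ZMod 2), (0 : ZMod 2)) := by
  have := gen_mem q 0; simpa [dg, X] using this
lemma mem_Xi : Xi q ∈ grading q ((0 : ZMod 2), (1 : ZMod 2)) := by
  have := gen_mem q 1; simpa [dg, Xi] using this
lemma mem_Th : Th q ∈ grading q ((1 : ZMod 2), (0 : ZMod 2)) := by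
  have := gen_mem q 2; simpa [dg, Th] using this
lemma mem_Zg : Zg q ∈ grading q ((1 : ZMod 2), (1 : ZMod 2)) := by
  have := gen_mem q 3; simpa [dg, Zg] using this

lemma mul_mem_iSup {a b : Aq q} (ha : a ∈ ⨆ γ, grading q γ) (hb : b ∈ ⨆ γ, grading q γ) :
    a * b ∈ ⨆ γ, grading q γ := by
  refine Submodule.iSup_induction (motive := fun a => a * b ∈ ⨆ γ, grading q γ) _ ha
    (fun γ x hx => ?_) (by simp) (fun x y hx hy => by show (x+y)*b ∈ _; rw [add_mul]; exact add_mem hx hy)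
  refine Submodule.iSup_induction (motive := fun b => x * b ∈ ⨆ γ, grading q γ) _ hb
    (fun δ y hy => ?_) (by simp) (fun u v hu hv => by show x*(u+v) ∈ _; rw [mul_add]; exact add_mem hu hv)
  exact le_iSup (grading q) (γ + δ) (grading_mul q hx hy)

lemma mem_iSup_grading (a : Aq q) : a ∈ ⨆ γ, grading q γ := by
  obtain ⟨f, rfl⟩ := RingQuot.mkAlgHom_surjective ℂ (Rel q) a
  induction f using FreeAlgebra.induction with
  | grade0 r =>
      have h : (RingQuot.mkAlgHom ℂ (Rel q)) (algebraMap ℂ _ r) = r • (1 : Aq q) := by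
        rw [AlgHom.commutes, Algebra.algebraMap_eq_smul_one]
      rw [h]
      exact Submodule.smul_mem _ _ (le_iSup (grading q) 0 (one_mem q))
  | grade1 i => exact le_iSup (grading q) (dg i) (gen_mem q i)
  | mul a b ha hb => rw [map_mul]; exact mul_mem_iSup q ha hb
  | add a b ha hb => rw [map_add]; exact add_mem ha hb

lemma homog_induction {P : Aq q → Prop} (h0 : P 0)
    (hmem : ∀ (γ : ZMod 2 × ZMod 2) (a : Aq q), a ∈ grading q γ → P a)
    (hadd : ∀ a b : Aq q, P a → P b → P (a + b)) (a : Aq q) : P a :=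
  Submodule.iSup_induction (motive := P) (grading q) (mem_iSup_grading q a)
    (fun γ x hx => hmem γ x hx) h0 hadd

-- gsign lemmas
lemma zmod2_cases (a : ZMod 2) : a = 0 ∨ a = 1 := by revert a; decide

lemma neg_one_pow_val_add (a b : ZMod 2) :
    ((-1 : ℂ)) ^ (a + b).val = (-1 : ℂ) ^ a.val * (-1 : ℂ) ^ b.val := by
  rcases zmod2_cases a with rfl | rfl <;> rcases zmod2_cases b with rfl | rfl <;>
    norm_num [show ((0:ZMod 2)+0).val = 0 from rfl, show ((0:ZMod 2)+1).val = 1 from rfl,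
      show ((1:ZMod 2)+0).val = 1 from rfl, show ((1:ZMod 2)+1).val = 0 from rfl,
      show ((0:ZMod 2)).val = 0 from rfl, show ((1:ZMod 2)).val = 1 from rfl, show ((2:ZMod 2)).val = 0 from rfl]

lemma pair2_add_left (γ δ ε : ZMod 2 × ZMod 2) :
    pair2 (γ + δ) ε = pair2 γ ε + pair2 δ ε := by
  simp only [pair2, Prod.fst_add, Prod.snd_add]; ring

lemma pair2_add_right (γ δ ε : ZMod 2 × ZMod 2) :
    pair2 γ (δ + ε) = pair2 γ δ + pair2 γ ε := by
  simp only [pair2, Prod.fst_add, Prod.snd_add]; ring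

lemma gsign_add_left (γ δ ε : ZMod 2 × ZMod 2) :
    gsign (γ + δ) ε = gsign γ ε * gsign δ ε := by
  rw [gsign, pair2_add_left, neg_one_pow_val_add]; rfl

lemma gsign_add_right (γ δ ε : ZMod 2 × ZMod 2) :
    gsign γ (δ + ε) = gsign γ δ * gsign γ ε := by
  rw [gsign, pair2_add_right, neg_one_pow_val_add]; rfl

lemma gsign_eq_one {γ δ : ZMod 2 × ZMod 2} (h : pair2 γ δ = 0) : gsign γ δ = 1 := by
  rw [gsign, h]; norm_num [ZMod.val_zero]

lemma gsign_eq_neg_one {γ δ : ZMod 2 × ZMod 2} (h : pair2 γ δ = 1) : gsign γ δ = -1 := by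
  rw [gsign, h]; norm_num [show ((1:ZMod 2)).val = 1 from rfl, show ((2:ZMod 2)).val = 0 from rfl]

lemma gsign_zero_left (δ : ZMod 2 × ZMod 2) : gsign 0 δ = 1 :=
  gsign_eq_one (by simp [pair2])

lemma gsign_zero_right (γ : ZMod 2 × ZMod 2) : gsign γ 0 = 1 :=
  gsign_eq_one (by simp [pair2])

lemma gs_00_00 : gsign ((0:ZMod 2),(0:ZMod 2)) ((0:ZMod 2),(0:ZMod 2)) = 1 := gsign_eq_one (by decide)
lemma gs_00_01 : gsign ((0:ZMod 2),(0:ZMod 2)) ((0:ZMod 2),(1:ZMod 2)) = 1 := gsign_eq_one (by decide)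
lemma gs_00_10 : gsign ((0:ZMod 2),(0:ZMod 2)) ((1:ZMod 2),(0:ZMod 2)) = 1 := gsign_eq_one (by decide)
lemma gs_00_11 : gsign ((0:ZMod 2),(0:ZMod 2)) ((1:ZMod 2),(1:ZMod 2)) = 1 := gsign_eq_one (by decide)
lemma gs_01_00 : gsign ((0:ZMod 2),(1:ZMod 2)) ((0:ZMod 2),(0:ZMod 2)) = 1 := gsign_eq_one (by decide)
lemma gs_01_01 : gsign ((0:ZMod 2),(1:ZMod 2)) ((0:ZMod 2),(1:ZMod 2)) = -1 := gsign_eq_neg_one (by decide)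
lemma gs_01_10 : gsign ((0:ZMod 2),(1:ZMod 2)) ((1:ZMod 2),(0:ZMod 2)) = 1 := gsign_eq_one (by decide)
lemma gs_01_11 : gsign ((0:ZMod 2),(1:ZMod 2)) ((1:ZMod 2),(1:ZMod 2)) = -1 := gsign_eq_neg_one (by decide)
lemma gs_10_00 : gsign ((1:ZMod 2),(0:ZMod 2)) ((0:ZMod 2),(0:ZMod 2)) = 1 := gsign_eq_one (by decide)
lemma gs_10_01 : gsign ((1:ZMod 2),(0:ZMod 2)) ((0:ZMod 2),(1:ZMod 2)) = 1 := gsign_eq_one (by decide)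
lemma gs_10_10 : gsign ((1:ZMod 2),(0:ZMod 2)) ((1:ZMod 2),(0:ZMod 2)) = -1 := gsign_eq_neg_one (by decide)
lemma gs_10_11 : gsign ((1:ZMod 2),(0:ZMod 2)) ((1:ZMod 2),(1:ZMod 2)) = -1 := gsign_eq_neg_one (by decide)
lemma gs_11_00 : gsign ((1:ZMod 2),(1:ZMod 2)) ((0:ZMod 2),(0:ZMod 2)) = 1 := gsign_eq_one (by decide)
lemma gs_11_01 : gsign ((1:ZMod 2),(1:ZMod 2)) ((0:ZMod 2),(1:ZMod 2)) = -1 := gsign_eq_neg_one (by decide)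
lemma gs_11_10 : gsign ((1:ZMod 2),(1:ZMod 2)) ((1:ZMod 2),(0:ZMod 2)) = -1 := gsign_eq_neg_one (by decide)
lemma gs_11_11 : gsign ((1:ZMod 2),(1:ZMod 2)) ((1:ZMod 2),(1:ZMod 2)) = 1 := gsign_eq_one (by decide)

-- relations in Aq
lemma rel_x_xi : X q * Xi q = q • (Xi q * X q) := by
  have h := RingQuot.mkAlgHom_rel ℂ (Rel.x_xi (q := q))
  simpa only [map_mul, map_smul, X, Xi, gen] using h
lemma rel_x_th : X q * Th q = q • (Th q * X q) := by
  have h := RingQuot.mkAlgHom_rel ℂ (Rel.x_th (q := q))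
  simpa only [map_mul, map_smul, X, Th, gen] using h
lemma rel_x_z : X q * Zg q = Zg q * X q := by
  have h := RingQuot.mkAlgHom_rel ℂ (Rel.x_z (q := q))
  simpa only [map_mul, X, Zg, gen] using h
lemma rel_xi_sq : Xi q * Xi q = 0 := by
  have h := RingQuot.mkAlgHom_rel ℂ (Rel.xi_sq (q := q))
  simpa only [map_mul, map_zero, Xi, gen] using h
lemma rel_th_sq : Th q * Th q = 0 := by
  have h := RingQuot.mkAlgHom_rel ℂ (Rel.th_sq (q := q))
  simpa only [map_mul, map_zero, Th, gen] using h
lemma rel_xi_th : Xi q * Th q = Th q * Xi q := by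
  have h := RingQuot.mkAlgHom_rel ℂ (Rel.xi_th (q := q))
  simpa only [map_mul, Xi, Th, gen] using h
lemma rel_xi_z : Xi q * Zg q = (-q⁻¹) • (Zg q * Xi q) := by
  have h := RingQuot.mkAlgHom_rel ℂ (Rel.xi_z (q := q))
  simpa only [map_mul, map_smul, Xi, Zg, gen] using h
lemma rel_th_z : Th q * Zg q = (-q⁻¹) • (Zg q * Th q) := by
  have h := RingQuot.mkAlgHom_rel ℂ (Rel.th_z (q := q))
  simpa only [map_mul, map_smul, Th, Zg, gen] using h

/-- Type synonym carrying the graded multiplication. -/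
def Tg (q : ℂ) : Type := Aq q ⊗[ℂ] Aq q
noncomputable instance : AddCommGroup (Tg q) := inferInstanceAs (AddCommGroup (Aq q ⊗[ℂ] Aq q))
noncomputable instance : Module ℂ (Tg q) := inferInstanceAs (Module ℂ (Aq q ⊗[ℂ] Aq q))

-- tensor induction principles
section gm
variable {q}
variable (gmul : (Aq q ⊗[ℂ] Aq q) →ₗ[ℂ] (Aq q ⊗[ℂ] Aq q) →ₗ[ℂ] (Aq q ⊗[ℂ] Aq q))
variable (hgmul : ∀ {γ δ : ZMod 2 × ZMod 2} {b c : Aq q},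
      b ∈ grading q γ → c ∈ grading q δ → ∀ a d : Aq q,
        gmul (a ⊗ₜ[ℂ] b) (c ⊗ₜ[ℂ] d) = gsign γ δ • ((a * c) ⊗ₜ[ℂ] (b * d)))

lemma tensor_ind_right {P : Aq q ⊗[ℂ] Aq q → Prop} (h0 : P 0)
    (hadd : ∀ t u, P t → P u → P (t + u))
    (hmem : ∀ (γ : ZMod 2 × ZMod 2) (a b : Aq q), b ∈ grading q γ → P (a ⊗ₜ[ℂ] b))
    (t : Aq q ⊗[ℂ] Aq q) : P t := by
  induction t using TensorProduct.induction_on with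
  | zero => exact h0
  | add x y hx hy => exact hadd x y hx hy
  | tmul a b =>
      refine homog_induction q (P := fun b => P (a ⊗ₜ[ℂ] b)) ?_ (fun γ b hb => hmem γ a b hb)
        (fun b c hb hc => ?_) b
      · simpa [TensorProduct.tmul_zero] using h0
      · simp only [TensorProduct.tmul_add]; exact hadd _ _ hb hc

lemma tensor_ind_left {P : Aq q ⊗[ℂ] Aq q → Prop} (h0 : P 0)
    (hadd : ∀ t u, P t → P u → P (t + u))
    (hmem : ∀ (γ : ZMod 2 × ZMod 2) (a b : Aq q), a ∈ grading q γ → P (a ⊗ₜ[ℂ] b))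
    (t : Aq q ⊗[ℂ] Aq q) : P t := by
  induction t using TensorProduct.induction_on with
  | zero => exact h0
  | add x y hx hy => exact hadd x y hx hy
  | tmul a b =>
      refine homog_induction q (P := fun a => P (a ⊗ₜ[ℂ] b)) ?_ (fun γ a ha => hmem γ a b ha)
        (fun a c ha hc => ?_) a
      · simpa [TensorProduct.zero_tmul] using h0
      · simp only [TensorProduct.add_tmul]; exact hadd _ _ ha hc

lemma tensor_ind_both {P : Aq q ⊗[ℂ] Aq q → Prop} (h0 : P 0)
    (hadd : ∀ t u, P t → P u → P (t + u))
    (hmem : ∀ (γ δ : ZMod 2 × ZMod 2) (a b : Aq q),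
      a ∈ grading q γ → b ∈ grading q δ → P (a ⊗ₜ[ℂ] b))
    (t : Aq q ⊗[ℂ] Aq q) : P t := by
  induction t using TensorProduct.induction_on with
  | zero => exact h0
  | add x y hx hy => exact hadd x y hx hy
  | tmul a b =>
      refine homog_induction q (P := fun a => P (a ⊗ₜ[ℂ] b)) ?_ (fun γ a ha => ?_)
        (fun a c ha hc => ?_) a
      · simpa [TensorProduct.zero_tmul] using h0
      · refine homog_induction q (P := fun b => P (a ⊗ₜ[ℂ] b)) ?_
          (fun δ b hb => hmem γ δ a b ha hb) (fun b c hb hc => ?_) b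
        · simpa [TensorProduct.tmul_zero] using h0
        · simp only [TensorProduct.tmul_add]; exact hadd _ _ hb hc
      · simp only [TensorProduct.add_tmul]; exact hadd _ _ ha hc

include hgmul

lemma gmul_one_left (t : Aq q ⊗[ℂ] Aq q) :
    gmul ((1 : Aq q) ⊗ₜ[ℂ] (1 : Aq q)) t = t := by
  induction t using tensor_ind_left with
  | h0 => simp
  | hadd t u ht hu => rw [map_add, ht, hu]
  | hmem γ a b ha =>
      rw [hgmul (one_mem q) ha, gsign_zero_left, one_smul, one_mul, one_mul]

lemma gmul_one_right (t : Aq q ⊗[ℂ] Aq q) :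
    gmul t ((1 : Aq q) ⊗ₜ[ℂ] (1 : Aq q)) = t := by
  induction t using tensor_ind_right with
  | h0 => simp
  | hadd t u ht hu => rw [map_add, LinearMap.add_apply, ht, hu]
  | hmem γ a b hb =>
      rw [hgmul hb (one_mem q), gsign_zero_right, one_smul, mul_one, mul_one]

lemma gmul_assoc (t u v : Aq q ⊗[ℂ] Aq q) :
    gmul (gmul t u) v = gmul t (gmul u v) := by
  induction v using tensor_ind_left with
  | h0 => simp
  | hadd v1 v2 h1 h2 => rw [map_add, map_add, h1, h2, map_add]
  | hmem ε e f he =>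
    induction u using tensor_ind_both with
    | h0 => simp
    | hadd u1 u2 h1 h2 =>
        simp only [map_add, LinearMap.add_apply, h1, h2]
    | hmem γc γd c d hc hd =>
      induction t using tensor_ind_right with
      | h0 => simp
      | hadd t1 t2 h1 h2 =>
          simp only [map_add, LinearMap.add_apply, h1, h2]
      | hmem γb a b hb =>
          rw [hgmul hb hc, hgmul hd he, map_smul, LinearMap.smul_apply, map_smul,
            hgmul (grading_mul q hb hd) he, hgmul hb (grading_mul q hc he),
            smul_smul, smul_smul, gsign_add_left, gsign_add_right,
            mul_assoc a, mul_assoc b]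
          congr 1
          ring
-- key computations
lemma key_x_xi :
    gmul (X q ⊗ₜ[ℂ] X q) (X q ⊗ₜ[ℂ] Xi q + Xi q ⊗ₜ[ℂ] X q)
      = q • gmul (X q ⊗ₜ[ℂ] Xi q + Xi q ⊗ₜ[ℂ] X q) (X q ⊗ₜ[ℂ] X q) := by
  simp only [map_add, LinearMap.add_apply, map_smul, LinearMap.smul_apply,
    hgmul (mem_X q) (mem_X q), hgmul (mem_X q) (mem_Xi q), hgmul (mem_X q) (mem_Th q),
    hgmul (mem_X q) (mem_Zg q), hgmul (mem_Xi q) (mem_X q), hgmul (mem_Xi q) (mem_Xi q),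
    hgmul (mem_Xi q) (mem_Th q), hgmul (mem_Xi q) (mem_Zg q), hgmul (mem_Th q) (mem_X q),
    hgmul (mem_Th q) (mem_Xi q), hgmul (mem_Th q) (mem_Th q), hgmul (mem_Th q) (mem_Zg q),
    hgmul (mem_Zg q) (mem_X q), hgmul (mem_Zg q) (mem_Xi q), hgmul (mem_Zg q) (mem_Th q),
    hgmul (mem_Zg q) (mem_Zg q),
    gs_00_00, gs_00_01, gs_00_10, gs_00_11, gs_01_00, gs_01_01, gs_01_10, gs_01_11, gs_10_00, gs_10_01, gs_10_10, gs_10_11, gs_11_00, gs_11_01, gs_11_10, gs_11_11]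
  simp only [rel_x_xi, rel_x_th, rel_x_z, rel_xi_sq, rel_th_sq, rel_xi_th, rel_xi_z, rel_th_z,
    TensorProduct.tmul_smul, ← TensorProduct.smul_tmul', smul_smul, one_smul, neg_smul,
    TensorProduct.tmul_zero, TensorProduct.zero_tmul, smul_zero, neg_zero, add_zero, zero_add]
  all_goals match_scalars
  all_goals field_simp

lemma key_x_th :
    gmul (X q ⊗ₜ[ℂ] X q) (X q ⊗ₜ[ℂ] Th q + Th q ⊗ₜ[ℂ] X q)
      = q • gmul (X q ⊗ₜ[ℂ] Th q + Th q ⊗ₜ[ℂ] X q) (X q ⊗ₜ[ℂ] X q) := by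
  simp only [map_add, LinearMap.add_apply, map_smul, LinearMap.smul_apply,
    hgmul (mem_X q) (mem_X q), hgmul (mem_X q) (mem_Xi q), hgmul (mem_X q) (mem_Th q),
    hgmul (mem_X q) (mem_Zg q), hgmul (mem_Xi q) (mem_X q), hgmul (mem_Xi q) (mem_Xi q),
    hgmul (mem_Xi q) (mem_Th q), hgmul (mem_Xi q) (mem_Zg q), hgmul (mem_Th q) (mem_X q),
    hgmul (mem_Th q) (mem_Xi q), hgmul (mem_Th q) (mem_Th q), hgmul (mem_Th q) (mem_Zg q),
    hgmul (mem_Zg q) (mem_X q), hgmul (mem_Zg q) (mem_Xi q), hgmul (mem_Zg q) (mem_Th q),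
    hgmul (mem_Zg q) (mem_Zg q),
    gs_00_00, gs_00_01, gs_00_10, gs_00_11, gs_01_00, gs_01_01, gs_01_10, gs_01_11, gs_10_00, gs_10_01, gs_10_10, gs_10_11, gs_11_00, gs_11_01, gs_11_10, gs_11_11]
  simp only [rel_x_xi, rel_x_th, rel_x_z, rel_xi_sq, rel_th_sq, rel_xi_th, rel_xi_z, rel_th_z,
    TensorProduct.tmul_smul, ← TensorProduct.smul_tmul', smul_smul, one_smul, neg_smul,
    TensorProduct.tmul_zero, TensorProduct.zero_tmul, smul_zero, neg_zero, add_zero, zero_add]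
  all_goals match_scalars
  all_goals field_simp

lemma key_x_z :
    gmul (X q ⊗ₜ[ℂ] X q) (X q ⊗ₜ[ℂ] Zg q + Zg q ⊗ₜ[ℂ] X q)
      = gmul (X q ⊗ₜ[ℂ] Zg q + Zg q ⊗ₜ[ℂ] X q) (X q ⊗ₜ[ℂ] X q) := by
  simp only [map_add, LinearMap.add_apply, map_smul, LinearMap.smul_apply,
    hgmul (mem_X q) (mem_X q), hgmul (mem_X q) (mem_Xi q), hgmul (mem_X q) (mem_Th q),
    hgmul (mem_X q) (mem_Zg q), hgmul (mem_Xi q) (mem_X q), hgmul (mem_Xi q) (mem_Xi q),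
    hgmul (mem_Xi q) (mem_Th q), hgmul (mem_Xi q) (mem_Zg q), hgmul (mem_Th q) (mem_X q),
    hgmul (mem_Th q) (mem_Xi q), hgmul (mem_Th q) (mem_Th q), hgmul (mem_Th q) (mem_Zg q),
    hgmul (mem_Zg q) (mem_X q), hgmul (mem_Zg q) (mem_Xi q), hgmul (mem_Zg q) (mem_Th q),
    hgmul (mem_Zg q) (mem_Zg q),
    gs_00_00, gs_00_01, gs_00_10, gs_00_11, gs_01_00, gs_01_01, gs_01_10, gs_01_11, gs_10_00, gs_10_01, gs_10_10, gs_10_11, gs_11_00, gs_11_01, gs_11_10, gs_11_11]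
  simp only [rel_x_xi, rel_x_th, rel_x_z, rel_xi_sq, rel_th_sq, rel_xi_th, rel_xi_z, rel_th_z,
    TensorProduct.tmul_smul, ← TensorProduct.smul_tmul', smul_smul, one_smul, neg_smul,
    TensorProduct.tmul_zero, TensorProduct.zero_tmul, smul_zero, neg_zero, add_zero, zero_add]
  all_goals match_scalars
  all_goals field_simp

lemma key_xi_sq :
    gmul (X q ⊗ₜ[ℂ] Xi q + Xi q ⊗ₜ[ℂ] X q) (X q ⊗ₜ[ℂ] Xi q + Xi q ⊗ₜ[ℂ] X q) = 0 := by
  simp only [map_add, LinearMap.add_apply, map_smul, LinearMap.smul_apply,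
    hgmul (mem_X q) (mem_X q), hgmul (mem_X q) (mem_Xi q), hgmul (mem_X q) (mem_Th q),
    hgmul (mem_X q) (mem_Zg q), hgmul (mem_Xi q) (mem_X q), hgmul (mem_Xi q) (mem_Xi q),
    hgmul (mem_Xi q) (mem_Th q), hgmul (mem_Xi q) (mem_Zg q), hgmul (mem_Th q) (mem_X q),
    hgmul (mem_Th q) (mem_Xi q), hgmul (mem_Th q) (mem_Th q), hgmul (mem_Th q) (mem_Zg q),
    hgmul (mem_Zg q) (mem_X q), hgmul (mem_Zg q) (mem_Xi q), hgmul (mem_Zg q) (mem_Th q),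
    hgmul (mem_Zg q) (mem_Zg q),
    gs_00_00, gs_00_01, gs_00_10, gs_00_11, gs_01_00, gs_01_01, gs_01_10, gs_01_11, gs_10_00, gs_10_01, gs_10_10, gs_10_11, gs_11_00, gs_11_01, gs_11_10, gs_11_11]
  simp only [rel_x_xi, rel_x_th, rel_x_z, rel_xi_sq, rel_th_sq, rel_xi_th, rel_xi_z, rel_th_z,
    TensorProduct.tmul_smul, ← TensorProduct.smul_tmul', smul_smul, one_smul, neg_smul,
    TensorProduct.tmul_zero, TensorProduct.zero_tmul, smul_zero, neg_zero, add_zero, zero_add]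
  all_goals match_scalars
  all_goals field_simp
  all_goals ring

lemma key_th_sq :
    gmul (X q ⊗ₜ[ℂ] Th q + Th q ⊗ₜ[ℂ] X q) (X q ⊗ₜ[ℂ] Th q + Th q ⊗ₜ[ℂ] X q) = 0 := by
  simp only [map_add, LinearMap.add_apply, map_smul, LinearMap.smul_apply,
    hgmul (mem_X q) (mem_X q), hgmul (mem_X q) (mem_Xi q), hgmul (mem_X q) (mem_Th q),
    hgmul (mem_X q) (mem_Zg q), hgmul (mem_Xi q) (mem_X q), hgmul (mem_Xi q) (mem_Xi q),
    hgmul (mem_Xi q) (mem_Th q), hgmul (mem_Xi q) (mem_Zg q), hgmul (mem_Th q) (mem_X q),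
    hgmul (mem_Th q) (mem_Xi q), hgmul (mem_Th q) (mem_Th q), hgmul (mem_Th q) (mem_Zg q),
    hgmul (mem_Zg q) (mem_X q), hgmul (mem_Zg q) (mem_Xi q), hgmul (mem_Zg q) (mem_Th q),
    hgmul (mem_Zg q) (mem_Zg q),
    gs_00_00, gs_00_01, gs_00_10, gs_00_11, gs_01_00, gs_01_01, gs_01_10, gs_01_11, gs_10_00, gs_10_01, gs_10_10, gs_10_11, gs_11_00, gs_11_01, gs_11_10, gs_11_11]
  simp only [rel_x_xi, rel_x_th, rel_x_z, rel_xi_sq, rel_th_sq, rel_xi_th, rel_xi_z, rel_th_z,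
    TensorProduct.tmul_smul, ← TensorProduct.smul_tmul', smul_smul, one_smul, neg_smul,
    TensorProduct.tmul_zero, TensorProduct.zero_tmul, smul_zero, neg_zero, add_zero, zero_add]
  all_goals match_scalars
  all_goals field_simp
  all_goals ring

lemma key_xi_th :
    gmul (X q ⊗ₜ[ℂ] Xi q + Xi q ⊗ₜ[ℂ] X q) (X q ⊗ₜ[ℂ] Th q + Th q ⊗ₜ[ℂ] X q)
      = gmul (X q ⊗ₜ[ℂ] Th q + Th q ⊗ₜ[ℂ] X q) (X q ⊗ₜ[ℂ] Xi q + Xi q ⊗ₜ[ℂ] X q) := by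
  simp only [map_add, LinearMap.add_apply, map_smul, LinearMap.smul_apply,
    hgmul (mem_X q) (mem_X q), hgmul (mem_X q) (mem_Xi q), hgmul (mem_X q) (mem_Th q),
    hgmul (mem_X q) (mem_Zg q), hgmul (mem_Xi q) (mem_X q), hgmul (mem_Xi q) (mem_Xi q),
    hgmul (mem_Xi q) (mem_Th q), hgmul (mem_Xi q) (mem_Zg q), hgmul (mem_Th q) (mem_X q),
    hgmul (mem_Th q) (mem_Xi q), hgmul (mem_Th q) (mem_Th q), hgmul (mem_Th q) (mem_Zg q),
    hgmul (mem_Zg q) (mem_X q), hgmul (mem_Zg q) (mem_Xi q), hgmul (mem_Zg q) (mem_Th q),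
    hgmul (mem_Zg q) (mem_Zg q),
    gs_00_00, gs_00_01, gs_00_10, gs_00_11, gs_01_00, gs_01_01, gs_01_10, gs_01_11, gs_10_00, gs_10_01, gs_10_10, gs_10_11, gs_11_00, gs_11_01, gs_11_10, gs_11_11]
  simp only [rel_x_xi, rel_x_th, rel_x_z, rel_xi_sq, rel_th_sq, rel_xi_th, rel_xi_z, rel_th_z,
    TensorProduct.tmul_smul, ← TensorProduct.smul_tmul', smul_smul, one_smul, neg_smul,
    TensorProduct.tmul_zero, TensorProduct.zero_tmul, smul_zero, neg_zero, add_zero, zero_add]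
  all_goals match_scalars
  all_goals field_simp

lemma key_xi_z (hq : q ≠ 0) :
    gmul (X q ⊗ₜ[ℂ] Xi q + Xi q ⊗ₜ[ℂ] X q) (X q ⊗ₜ[ℂ] Zg q + Zg q ⊗ₜ[ℂ] X q)
      = (-q⁻¹) • gmul (X q ⊗ₜ[ℂ] Zg q + Zg q ⊗ₜ[ℂ] X q) (X q ⊗ₜ[ℂ] Xi q + Xi q ⊗ₜ[ℂ] X q) := by
  simp only [map_add, LinearMap.add_apply, map_smul, LinearMap.smul_apply,
    hgmul (mem_X q) (mem_X q), hgmul (mem_X q) (mem_Xi q), hgmul (mem_X q) (mem_Th q),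
    hgmul (mem_X q) (mem_Zg q), hgmul (mem_Xi q) (mem_X q), hgmul (mem_Xi q) (mem_Xi q),
    hgmul (mem_Xi q) (mem_Th q), hgmul (mem_Xi q) (mem_Zg q), hgmul (mem_Th q) (mem_X q),
    hgmul (mem_Th q) (mem_Xi q), hgmul (mem_Th q) (mem_Th q), hgmul (mem_Th q) (mem_Zg q),
    hgmul (mem_Zg q) (mem_X q), hgmul (mem_Zg q) (mem_Xi q), hgmul (mem_Zg q) (mem_Th q),
    hgmul (mem_Zg q) (mem_Zg q),
    gs_00_00, gs_00_01, gs_00_10, gs_00_11, gs_01_00, gs_01_01, gs_01_10, gs_01_11, gs_10_00, gs_10_01, gs_10_10, gs_10_11, gs_11_00, gs_11_01, gs_11_10, gs_11_11]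
  simp only [rel_x_xi, rel_x_th, rel_x_z, rel_xi_sq, rel_th_sq, rel_xi_th, rel_xi_z, rel_th_z,
    TensorProduct.tmul_smul, ← TensorProduct.smul_tmul', smul_smul, one_smul, neg_smul,
    TensorProduct.tmul_zero, TensorProduct.zero_tmul, smul_zero, neg_zero, add_zero, zero_add]
  all_goals match_scalars
  all_goals field_simp

lemma key_th_z (hq : q ≠ 0) :
    gmul (X q ⊗ₜ[ℂ] Th q + Th q ⊗ₜ[ℂ] X q) (X q ⊗ₜ[ℂ] Zg q + Zg q ⊗ₜ[ℂ] X q)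
      = (-q⁻¹) • gmul (X q ⊗ₜ[ℂ] Zg q + Zg q ⊗ₜ[ℂ] X q) (X q ⊗ₜ[ℂ] Th q + Th q ⊗ₜ[ℂ] X q) := by
  simp only [map_add, LinearMap.add_apply, map_smul, LinearMap.smul_apply,
    hgmul (mem_X q) (mem_X q), hgmul (mem_X q) (mem_Xi q), hgmul (mem_X q) (mem_Th q),
    hgmul (mem_X q) (mem_Zg q), hgmul (mem_Xi q) (mem_X q), hgmul (mem_Xi q) (mem_Xi q),
    hgmul (mem_Xi q) (mem_Th q), hgmul (mem_Xi q) (mem_Zg q), hgmul (mem_Th q) (mem_X q),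
    hgmul (mem_Th q) (mem_Xi q), hgmul (mem_Th q) (mem_Th q), hgmul (mem_Th q) (mem_Zg q),
    hgmul (mem_Zg q) (mem_X q), hgmul (mem_Zg q) (mem_Xi q), hgmul (mem_Zg q) (mem_Th q),
    hgmul (mem_Zg q) (mem_Zg q),
    gs_00_00, gs_00_01, gs_00_10, gs_00_11, gs_01_00, gs_01_01, gs_01_10, gs_01_11, gs_10_00, gs_10_01, gs_10_10, gs_10_11, gs_11_00, gs_11_01, gs_11_10, gs_11_11]
  simp only [rel_x_xi, rel_x_th, rel_x_z, rel_xi_sq, rel_th_sq, rel_xi_th, rel_xi_z, rel_th_z,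
    TensorProduct.tmul_smul, ← TensorProduct.smul_tmul', smul_smul, one_smul, neg_smul,
    TensorProduct.tmul_zero, TensorProduct.zero_tmul, smul_zero, neg_zero, add_zero, zero_add]
  all_goals match_scalars
  all_goals field_simp

lemma exists_D (hq : q ≠ 0) :
    ∃ D : Aq q →ₗ[ℂ] Aq q ⊗[ℂ] Aq q,
      D 1 = (1 : Aq q) ⊗ₜ[ℂ] (1 : Aq q) ∧
      (∀ a b : Aq q, D (a * b) = gmul (D a) (D b)) ∧
      D (X q) = X q ⊗ₜ[ℂ] X q ∧
      D (Xi q) = X q ⊗ₜ[ℂ] Xi q + Xi q ⊗ₜ[ℂ] X q ∧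
      D (Th q) = X q ⊗ₜ[ℂ] Th q + Th q ⊗ₜ[ℂ] X q ∧
      D (Zg q) = X q ⊗ₜ[ℂ] Zg q + Zg q ⊗ₜ[ℂ] X q := by
  letI instR : Ring (Tg q) :=
    { (inferInstance : AddCommGroup (Tg q)) with
      mul := fun a b => gmul a b
      one := ((1 : Aq q) ⊗ₜ[ℂ] (1 : Aq q) : Aq q ⊗[ℂ] Aq q)
      mul_assoc := fun a b c => gmul_assoc gmul hgmul a b c
      one_mul := fun a => gmul_one_left gmul hgmul a
      mul_one := fun a => gmul_one_right gmul hgmul a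
      left_distrib := fun a b c => map_add (gmul a) b c
      right_distrib := fun a b c => by
        show gmul (a + b) c = gmul a c + gmul b c
        exact LinearMap.map_add₂ gmul a b c
      zero_mul := fun a => by
        show gmul 0 a = 0
        exact LinearMap.map_zero₂ gmul a
      mul_zero := fun a => map_zero (gmul a) }
  letI instA : Algebra ℂ (Tg q) :=
    Algebra.ofModule
      (fun r x y => by
        show gmul (r • x) y = r • gmul x y
        exact LinearMap.map_smul₂ gmul r x y)
      (fun r x y => map_smul (gmul x) r y)
  obtain ⟨φ, hφ0, hφ1, hφ2, hφ3⟩ :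
      ∃ φ : FreeAlgebra ℂ (Fin 4) →ₐ[ℂ] Tg q,
        φ (FreeAlgebra.ι ℂ 0) = (X q ⊗ₜ[ℂ] X q : Aq q ⊗[ℂ] Aq q) ∧
        φ (FreeAlgebra.ι ℂ 1) = (X q ⊗ₜ[ℂ] Xi q + Xi q ⊗ₜ[ℂ] X q : Aq q ⊗[ℂ] Aq q) ∧
        φ (FreeAlgebra.ι ℂ 2) = (X q ⊗ₜ[ℂ] Th q + Th q ⊗ₜ[ℂ] X q : Aq q ⊗[ℂ] Aq q) ∧
        φ (FreeAlgebra.ι ℂ 3) = (X q ⊗ₜ[ℂ] Zg q + Zg q ⊗ₜ[ℂ] X q : Aq q ⊗[ℂ] Aq q) := by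
    refine ⟨FreeAlgebra.lift ℂ
      ![(X q ⊗ₜ[ℂ] X q : Aq q ⊗[ℂ] Aq q),
        (X q ⊗ₜ[ℂ] Xi q + Xi q ⊗ₜ[ℂ] X q : Aq q ⊗[ℂ] Aq q),
        (X q ⊗ₜ[ℂ] Th q + Th q ⊗ₜ[ℂ] X q : Aq q ⊗[ℂ] Aq q),
        (X q ⊗ₜ[ℂ] Zg q + Zg q ⊗ₜ[ℂ] X q : Aq q ⊗[ℂ] Aq q)], ?_, ?_, ?_, ?_⟩ <;>
      simp [FreeAlgebra.lift_ι_apply] <;> rfl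
  have hrel : ∀ ⦃a b : FreeAlgebra ℂ (Fin 4)⦄, Rel q a b → φ a = φ b := by
    intro a b h
    cases h with
    | x_xi => rw [map_mul, map_smul, map_mul, hφ0, hφ1]; exact key_x_xi gmul hgmul
    | x_th => rw [map_mul, map_smul, map_mul, hφ0, hφ2]; exact key_x_th gmul hgmul
    | x_z => rw [map_mul, map_mul, hφ0, hφ3]; exact key_x_z gmul hgmul
    | xi_sq => rw [map_mul, map_zero, hφ1]; exact key_xi_sq gmul hgmul
    | th_sq => rw [map_mul, map_zero, hφ2]; exact key_th_sq gmul hgmul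
    | xi_th => rw [map_mul, map_mul, hφ1, hφ2]; exact key_xi_th gmul hgmul
    | xi_z => rw [map_mul, map_smul, map_mul, hφ1, hφ3]; exact key_xi_z gmul hgmul hq
    | th_z => rw [map_mul, map_smul, map_mul, hφ2, hφ3]; exact key_th_z gmul hgmul hq
  let ψ : Aq q →ₐ[ℂ] Tg q := RingQuot.liftAlgHom ℂ ⟨φ, hrel⟩
  have hψ : ∀ x : FreeAlgebra ℂ (Fin 4), ψ (RingQuot.mkAlgHom ℂ (Rel q) x) = φ x :=
    fun x => RingQuot.liftAlgHom_mkAlgHom_apply ℂ φ hrel x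
  refine ⟨ψ.toLinearMap, ?_, fun a b => map_mul ψ a b, ?_, ?_, ?_, ?_⟩
  · exact map_one ψ
  · exact (hψ (FreeAlgebra.ι ℂ 0)).trans hφ0
  · exact (hψ (FreeAlgebra.ι ℂ 1)).trans hφ1
  · exact (hψ (FreeAlgebra.ι ℂ 2)).trans hφ2
  · exact (hψ (FreeAlgebra.ι ℂ 3)).trans hφ3

end gm


end DGQS

open DGQS in
theorem statement5 (q : ℂ) (hq : q ≠ 0) (hqroot : ∀ n : ℕ, 0 < n → q ^ n ≠ 1)
    (gmul : (Aq q ⊗[ℂ] Aq q) →ₗ[ℂ] (Aq q ⊗[ℂ] Aq q) →ₗ[ℂ] (Aq q ⊗[ℂ] Aq q))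
    (hgmul : ∀ {γ δ : ZMod 2 × ZMod 2} {b c : Aq q},
      b ∈ grading q γ → c ∈ grading q δ → ∀ a d : Aq q,
        gmul (a ⊗ₜ[ℂ] b) (c ⊗ₜ[ℂ] d) = gsign γ δ • ((a * c) ⊗ₜ[ℂ] (b * d))) :
    gmul (X q ⊗ₜ[ℂ] Xi q + Xi q ⊗ₜ[ℂ] X q) (X q ⊗ₜ[ℂ] Zg q + Zg q ⊗ₜ[ℂ] X q)
        = (-q⁻¹) • gmul (X q ⊗ₜ[ℂ] Zg q + Zg q ⊗ₜ[ℂ] X q)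
            (X q ⊗ₜ[ℂ] Xi q + Xi q ⊗ₜ[ℂ] X q) ∧
    gmul (X q ⊗ₜ[ℂ] Th q + Th q ⊗ₜ[ℂ] X q) (X q ⊗ₜ[ℂ] Zg q + Zg q ⊗ₜ[ℂ] X q)
        = (-q⁻¹) • gmul (X q ⊗ₜ[ℂ] Zg q + Zg q ⊗ₜ[ℂ] X q)
            (X q ⊗ₜ[ℂ] Th q + Th q ⊗ₜ[ℂ] X q) ∧
    ∃ D : Aq q →ₗ[ℂ] Aq q ⊗[ℂ] Aq q,
      D 1 = 1 ⊗ₜ[ℂ] 1 ∧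
      (∀ a b : Aq q, D (a * b) = gmul (D a) (D b)) ∧
      D (X q) = X q ⊗ₜ[ℂ] X q ∧
      D (Xi q) = X q ⊗ₜ[ℂ] Xi q + Xi q ⊗ₜ[ℂ] X q ∧
      D (Th q) = X q ⊗ₜ[ℂ] Th q + Th q ⊗ₜ[ℂ] X q ∧
      D (Zg q) = X q ⊗ₜ[ℂ] Zg q + Zg q ⊗ₜ[ℂ] X q := by
  exact ⟨key_xi_z gmul hgmul hq, key_th_z gmul hgmul hq, exists_D gmul hgmul hq⟩
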